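/- Let X ⊆ ℝ^d be nonempty, convex, and compact, and let F : X → ℝ^d be Borel measurable and bounded. Define the VI gap function VIGap(x) := −min_{x' ∈ X} ⟨F(x), x' − x⟩ = max_{x' ∈ X} ⟨F(x), x − x'⟩ (the extremum is attained since X is compact); VIGap is nonnegative and Borel measurable. Let ε ≥ 0 and let μ be a Borel probability measure on X such that ∫ ⟨F(x), φ(x) − x⟩ dμ(x) ≥ −ε for every Borel measurable map φ : X → X. Then ∫ VIGap(x) dμ(x) ≤ ε. -/

import Mathlib

open MeasureTheory Filter
open scoped RealInnerProductSpace Topology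

/-- Auxiliary greedy selector: among `e 0, …, e n`, pick one maximizing `⟪F x, x - ·⟫`. -/
noncomputable def eviPhiAux {d : ℕ} (F : EuclideanSpace ℝ (Fin d) → EuclideanSpace ℝ (Fin d))
    (e : ℕ → EuclideanSpace ℝ (Fin d)) :
    ℕ → EuclideanSpace ℝ (Fin d) → EuclideanSpace ℝ (Fin d)
  | 0 => fun _ => e 0
  | (n+1) => fun x =>
      if ⟪F x, x - eviPhiAux F e n x⟫ < ⟪F x, x - e (n+1)⟫ then e (n+1) else eviPhiAux F e n x

lemma eviPhiAux_mem_range {d : ℕ} (F : EuclideanSpace ℝ (Fin d) → EuclideanSpace ℝ (Fin d))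
    (e : ℕ → EuclideanSpace ℝ (Fin d)) (n : ℕ) (x : EuclideanSpace ℝ (Fin d)) :
    eviPhiAux F e n x ∈ Set.range e := by
  induction n with
  | zero => exact ⟨0, rfl⟩
  | succ n ih =>
    simp only [eviPhiAux]
    split
    · exact ⟨n+1, rfl⟩
    · exact ih

lemma eviPhiAux_measurable {d : ℕ} {F : EuclideanSpace ℝ (Fin d) → EuclideanSpace ℝ (Fin d)}
    (hF : Measurable F) (e : ℕ → EuclideanSpace ℝ (Fin d)) (n : ℕ) :
    Measurable (eviPhiAux F e n) := by
  induction n with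
  | zero => exact measurable_const
  | succ n ih =>
    have h1 : Measurable fun x => ⟪F x, x - eviPhiAux F e n x⟫ :=
      hF.inner (measurable_id.sub ih)
    have h2 : Measurable fun x => ⟪F x, x - e (n+1)⟫ :=
      hF.inner (measurable_id.sub measurable_const)
    exact Measurable.ite (measurableSet_lt h1 h2) measurable_const ih

lemma eviPhiAux_succ_eq {d : ℕ} (F : EuclideanSpace ℝ (Fin d) → EuclideanSpace ℝ (Fin d))
    (e : ℕ → EuclideanSpace ℝ (Fin d)) (n : ℕ) (x : EuclideanSpace ℝ (Fin d)) :
    ⟪F x, x - eviPhiAux F e (n+1) x⟫ =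
      max ⟪F x, x - eviPhiAux F e n x⟫ ⟪F x, x - e (n+1)⟫ := by
  simp only [eviPhiAux]
  split
  · next h => rw [max_eq_right h.le]
  · next h => rw [max_eq_left (not_lt.1 h)]

lemma eviPhiAux_le {d : ℕ} (F : EuclideanSpace ℝ (Fin d) → EuclideanSpace ℝ (Fin d))
    (e : ℕ → EuclideanSpace ℝ (Fin d)) (n k : ℕ) (hk : k ≤ n) (x : EuclideanSpace ℝ (Fin d)) :
    ⟪F x, x - e k⟫ ≤ ⟪F x, x - eviPhiAux F e n x⟫ := by
  induction n with
  | zero =>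
    interval_cases k
    simp [eviPhiAux]
  | succ n ih =>
    rw [eviPhiAux_succ_eq]
    rcases Nat.lt_or_ge k (n+1) with h | h
    · exact le_max_of_le_left (ih (Nat.lt_succ_iff.1 h))
    · have : k = n + 1 := le_antisymm hk h
      subst this
      exact le_max_right _ _

lemma eviPhiAux_monotone {d : ℕ} (F : EuclideanSpace ℝ (Fin d) → EuclideanSpace ℝ (Fin d))
    (e : ℕ → EuclideanSpace ℝ (Fin d)) (x : EuclideanSpace ℝ (Fin d)) :
    Monotone fun n => ⟪F x, x - eviPhiAux F e n x⟫ := by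
  apply monotone_nat_of_le_succ
  intro n
  rw [eviPhiAux_succ_eq]
  exact le_max_left _ _

theorem evi_all_measurable_deviations_vigap {d : ℕ}
    (X : Set (EuclideanSpace ℝ (Fin d)))
    (hXne : X.Nonempty) (hXconv : Convex ℝ X) (hXcomp : IsCompact X)
    (F : EuclideanSpace ℝ (Fin d) → EuclideanSpace ℝ (Fin d))
    (hFmeas : Measurable F) (B : ℝ) (hFbd : ∀ x ∈ X, ‖F x‖ ≤ B)
    (ε : ℝ) (hε : 0 ≤ ε)
    (μ : Measure (EuclideanSpace ℝ (Fin d))) [IsProbabilityMeasure μ] (hsupp : μ Xᶜ = 0)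
    (hEVI : ∀ φ : EuclideanSpace ℝ (Fin d) → EuclideanSpace ℝ (Fin d),
      Measurable φ → Set.MapsTo φ X X → (∫ x, ⟪F x, φ x - x⟫ ∂μ) ≥ -ε) :
    (∫ x, (⨆ x' ∈ X, ⟪F x, x - x'⟫) ∂μ) ≤ ε := by
  classical
  obtain ⟨R, hR⟩ := hXcomp.isBounded.subset_closedBall 0
  haveI : Nonempty X := hXne.to_subtype
  obtain ⟨u, hu⟩ := TopologicalSpace.exists_dense_seq X
  set e : ℕ → EuclideanSpace ℝ (Fin d) := fun k => (u k : EuclideanSpace ℝ (Fin d)) with he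
  have heX : ∀ k, e k ∈ X := fun k => (u k).2
  set c : EuclideanSpace ℝ (Fin d) → EuclideanSpace ℝ (Fin d) → ℝ :=
    fun x x' => ⟪F x, x - x'⟫ with hc
  -- basic bounds
  have hB0 : 0 ≤ B := le_trans (norm_nonneg _) (hFbd _ hXne.choose_spec)
  have hnorm : ∀ x' ∈ X, ‖x'‖ ≤ R := by
    intro x' hx'
    simpa [Metric.mem_closedBall, dist_eq_norm] using hR hx'
  set C : ℝ := B * (2 * R) with hCdef
  have hcbd : ∀ x ∈ X, ∀ x' ∈ X, |c x x'| ≤ C := by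
    intro x hx x' hx'
    have h1 : |c x x'| ≤ ‖F x‖ * ‖x - x'‖ := abs_real_inner_le_norm (F x) (x - x')
    have h2 : ‖x - x'‖ ≤ 2 * R := by
      calc ‖x - x'‖ ≤ ‖x‖ + ‖x'‖ := norm_sub_le _ _
        _ ≤ R + R := add_le_add (hnorm x hx) (hnorm x' hx')
        _ = 2 * R := by ring
    calc |c x x'| ≤ ‖F x‖ * ‖x - x'‖ := h1
      _ ≤ B * (2 * R) := mul_le_mul (hFbd x hx) h2 (norm_nonneg _) hB0
  have hbddc : ∀ x, BddAbove (Set.range fun k => c x (e k)) := by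
    intro x
    refine ⟨‖F x‖ * (‖x‖ + R), ?_⟩
    rintro r ⟨k, rfl⟩
    calc c x (e k) ≤ ‖F x‖ * ‖x - e k‖ := real_inner_le_norm _ _
      _ ≤ ‖F x‖ * (‖x‖ + R) := by
          gcongr
          exact (norm_sub_le _ _).trans (by gcongr; exact hnorm _ (heX k))
  set S : EuclideanSpace ℝ (Fin d) → ℝ := fun x => ⨆ k, c x (e k) with hSdef
  have hle_S : ∀ x k, c x (e k) ≤ S x := fun x k => le_ciSup (hbddc x) k
  -- density: sup over the sequence dominates values on X
  have hdense : ∀ x, ∀ x' ∈ X, c x x' ≤ S x := by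
    intro x x' hx'
    have hmem : (⟨x', hx'⟩ : X) ∈ closure (Set.range u) := by
      rw [hu.closure_range]; trivial
    obtain ⟨v, hv1, hv2⟩ := mem_closure_iff_seq_limit.1 hmem
    choose k hk using hv1
    have hcont : Continuous (c x) := continuous_const.inner (continuous_const.sub continuous_id)
    have h1 : Tendsto (fun n => ((v n : X) : EuclideanSpace ℝ (Fin d))) atTop (𝓝 x') :=
      (continuous_subtype_val.tendsto _).comp hv2
    have h2 : (fun n => e (k n)) = fun n => ((v n : X) : EuclideanSpace ℝ (Fin d)) := by
      funext n; rw [he]; exact congrArg _ (hk n)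
    have htend : Tendsto (fun n => c x (e (k n))) atTop (𝓝 (c x x')) := by
      rw [show (fun n => c x (e (k n))) = (c x) ∘ (fun n => e (k n)) from rfl, h2]
      exact (hcont.tendsto x').comp h1
    exact le_of_tendsto htend (Eventually.of_forall fun n => hle_S x (k n))
  -- the approximating sequence
  set f : ℕ → EuclideanSpace ℝ (Fin d) → ℝ := fun n x => c x (eviPhiAux F e n x) with hfdef
  have hf_le_S : ∀ n x, f n x ≤ S x := by
    intro n x
    obtain ⟨k, hk⟩ := eviPhiAux_mem_range F e n x
    have : f n x = c x (e k) := by rw [hfdef]; simp [hk.symm]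
    rw [this]; exact hle_S x k
  have hf_mono : ∀ x, Monotone fun n => f n x := fun x => eviPhiAux_monotone F e x
  have hf_bdd : ∀ x, BddAbove (Set.range fun n => f n x) :=
    fun x => ⟨S x, by rintro r ⟨n, rfl⟩; exact hf_le_S n x⟩
  have hf_tendsto : ∀ x, Tendsto (fun n => f n x) atTop (𝓝 (S x)) := by
    intro x
    have h := tendsto_atTop_ciSup (hf_mono x) (hf_bdd x)
    have heq : (⨆ n, f n x) = S x := by
      apply le_antisymm
      · exact ciSup_le fun n => hf_le_S n x
      · exact ciSup_le fun k => le_trans (eviPhiAux_le F e k k le_rfl x) (le_ciSup (hf_bdd x) k)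
    rwa [heq] at h
  -- measurability
  have hf_meas : ∀ n, Measurable (f n) := fun n =>
    hFmeas.inner (measurable_id.sub (eviPhiAux_measurable hFmeas e n))
  have hS_meas : Measurable S := by
    apply measurable_of_tendsto_metrizable' atTop hf_meas
    rw [tendsto_pi_nhds]
    exact hf_tendsto
  -- a.e. membership in X
  have hae : ∀ᵐ x ∂μ, x ∈ X := by
    rw [MeasureTheory.ae_iff]
    exact hsupp
  -- integrability
  have hf_int : ∀ n, Integrable (f n) μ := by
    intro n
    refine Integrable.mono' (integrable_const C) (hf_meas n).aestronglyMeasurable ?_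
    filter_upwards [hae] with x hx
    obtain ⟨k, hk⟩ := eviPhiAux_mem_range F e n x
    have : f n x = c x (e k) := by rw [hfdef]; simp [hk.symm]
    rw [Real.norm_eq_abs, this]
    exact hcbd x hx _ (heX k)
  have hS_int : Integrable S μ := by
    refine Integrable.mono' (integrable_const C) hS_meas.aestronglyMeasurable ?_
    filter_upwards [hae] with x hx
    rw [Real.norm_eq_abs, abs_le]
    constructor
    · have h1 : -C ≤ c x (e 0) := (abs_le.1 (hcbd x hx _ (heX 0))).1
      exact h1.trans (hle_S x 0)
    · exact ciSup_le fun k => (abs_le.1 (hcbd x hx _ (heX k))).2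
  -- each approximation has integral ≤ ε
  have hf_int_le : ∀ n, (∫ x, f n x ∂μ) ≤ ε := by
    intro n
    have hmaps : Set.MapsTo (eviPhiAux F e n) X X := by
      intro x _
      obtain ⟨k, hk⟩ := eviPhiAux_mem_range F e n x
      rw [← hk]; exact heX k
    have hEVIn := hEVI (eviPhiAux F e n) (eviPhiAux_measurable hFmeas e n) hmaps
    have hneg : ∀ x, f n x = -⟪F x, eviPhiAux F e n x - x⟫ := by
      intro x
      rw [hfdef]
      simp only [hc]
      rw [← inner_neg_right, neg_sub]
    calc (∫ x, f n x ∂μ) = ∫ x, -⟪F x, eviPhiAux F e n x - x⟫ ∂μ := by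
          congr 1; funext x; exact hneg x
      _ = -(∫ x, ⟪F x, eviPhiAux F e n x - x⟫ ∂μ) := integral_neg _
      _ ≤ -(-ε) := neg_le_neg hEVIn
      _ = ε := neg_neg ε
  -- pass to the limit
  have hlim : Tendsto (fun n => ∫ x, f n x ∂μ) atTop (𝓝 (∫ x, S x ∂μ)) :=
    integral_tendsto_of_tendsto_of_monotone hf_int hS_int
      (Eventually.of_forall hf_mono) (Eventually.of_forall hf_tendsto)
  have hSle : (∫ x, S x ∂μ) ≤ ε := le_of_tendsto hlim (Eventually.of_forall hf_int_le)
  -- identify the integrand with S a.e.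
  have hcongr : (∫ x, (⨆ x' ∈ X, ⟪F x, x - x'⟫) ∂μ) = ∫ x, S x ∂μ := by
    apply integral_congr_ae
    filter_upwards [hae] with x hx
    have hempty : ∀ x' : EuclideanSpace ℝ (Fin d), x' ∉ X → (⨆ _ : x' ∈ X, c x x') = 0 := by
      intro x' h
      haveI : IsEmpty (x' ∈ X) := ⟨h⟩
      exact Real.iSup_of_isEmpty _
    have hbddU : BddAbove (Set.range fun x' => ⨆ _ : x' ∈ X, c x x') := by
      refine ⟨max (‖F x‖ * (‖x‖ + R)) 0, ?_⟩
      rintro r ⟨x', rfl⟩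
      show (⨆ _ : x' ∈ X, c x x') ≤ _
      by_cases h : x' ∈ X
      · rw [ciSup_pos h]
        refine le_max_of_le_left ?_
        calc c x x' ≤ ‖F x‖ * ‖x - x'‖ := real_inner_le_norm _ _
          _ ≤ ‖F x‖ * (‖x‖ + R) := by
              gcongr
              exact (norm_sub_le _ _).trans (by gcongr; exact hnorm _ h)
      · rw [hempty x' h]
        exact le_max_right _ _
    have hS0 : 0 ≤ S x := by
      have hcc : c x x = 0 := by simp [hc]
      have h := hdense x x hx
      rwa [hcc] at h
    show (⨆ x' ∈ X, c x x') = S x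
    apply le_antisymm
    · refine ciSup_le fun x' => ?_
      by_cases h : x' ∈ X
      · rw [ciSup_pos h]; exact hdense x x' h
      · rw [hempty x' h]
        exact hS0
    · refine ciSup_le fun k => ?_
      have h1 : c x (e k) = ⨆ _ : e k ∈ X, c x (e k) :=
        (ciSup_pos (f := fun _ => c x (e k)) (heX k)).symm
      rw [h1]
      exact le_ciSup hbddU (e k)
  rw [hcongr]
  exact hSle
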